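/- arXiv:1708.02565 — 2 statements merged into one kernel-verified Lean document; each statement's English description precedes it below -/
import Mathlib

section
/- Let G be a finite group and H a maximal subgroup of G. Then there exists an irreducible finite-dimensional complex representation V of G such that the pointwise stabilizer of the H-fixed subspace equals H, i.e., G_{(V^H)} = H. -/
/-- The fixed-point subspace `V^H` of a subgroup `H` under a representation `ρ`. -/
def fixedSubmodule {G : Type*} [Group G] {V : Type*} [AddCommGroup V] [Module ℂ V]
    (ρ : Representation ℂ G V) (H : Subgroup G) : Submodule ℂ V where
  carrier := {v | ∀ h ∈ H, ρ h v = v}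
  add_mem' := by
    intro a b ha hb h hh
    rw [map_add, ha h hh, hb h hh]
  zero_mem' := by intro h hh; simp
  smul_mem' := by
    intro c v hv h hh
    rw [map_smul, hv h hh]

/-- The pointwise stabilizer subgroup `G_(X)` of a subset `X` under a representation `ρ`. -/
def repStab {G : Type*} [Group G] {V : Type*} [AddCommGroup V] [Module ℂ V]
    (ρ : Representation ℂ G V) (X : Set V) : Subgroup G where
  carrier := {g | ∀ x ∈ X, ρ g x = x}
  one_mem' := by intro x hx; simp
  mul_mem' := by
    intro a b ha hb x hx
    rw [map_mul, Module.End.mul_apply, hb x hx, ha x hx]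
  inv_mem' := by
    intro a ha x hx
    have h1 : ρ a x = x := ha x hx
    calc ρ a⁻¹ x = ρ a⁻¹ (ρ a x) := by rw [h1]
      _ = ρ (a⁻¹ * a) x := by rw [map_mul, Module.End.mul_apply]
      _ = x := by simp

/-- A representation is irreducible if the space is nontrivial and the only invariant
subspaces are `⊥` and `⊤`. -/
def IsIrredRep {G : Type*} [Group G] {V : Type*} [AddCommGroup V] [Module ℂ V]
    (ρ : Representation ℂ G V) : Prop :=
  Nontrivial V ∧ ∀ p : Submodule ℂ V, (∀ g : G, ∀ v ∈ p, ρ g v ∈ p) → p = ⊥ ∨ p = ⊤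

variable {G : Type} [Group G]

noncomputable def subRep {V : Type*} [AddCommGroup V] [Module ℂ V]
    (ρ : Representation ℂ G V) (p : Submodule ℂ V)
    (hp : ∀ g : G, ∀ v ∈ p, ρ g v ∈ p) : Representation ℂ G ↥p where
  toFun g := (ρ g).restrict (p := p) (q := p) (fun v hv => hp g v hv)
  map_one' := by ext v; simp [LinearMap.restrict_apply]
  map_mul' g₁ g₂ := by ext v; simp [LinearMap.restrict_apply]

@[simp] theorem subRep_apply {V : Type*} [AddCommGroup V] [Module ℂ V]
    (ρ : Representation ℂ G V) (p : Submodule ℂ V)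
    (hp : ∀ g : G, ∀ v ∈ p, ρ g v ∈ p) (g : G) (v : ↥p) :
    ↑(subRep ρ p hp g v) = ρ g ↑v := rfl

noncomputable def promote {V : Type} [AddCommGroup V] [Module ℂ V]
    (ρ : Representation ℂ G V) (p : Submodule ℂ V)
    (hp : ∀ g : G, ∀ v ∈ p, ρ g v ∈ p) : Submodule (MonoidAlgebra ℂ G) ρ.asModule where
  carrier := show Set ρ.asModule from (↑p : Set V)
  add_mem' := p.add_mem
  zero_mem' := p.zero_mem
  smul_mem' := by
    intro r v hv
    show ρ.asAlgebraHom r (ρ.asModuleEquiv v) ∈ p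
    induction r using MonoidAlgebra.induction_on with
    | of g => rw [Representation.asAlgebraHom_of]; exact hp g _ hv
    | add f g hf hg => rw [map_add]; exact p.add_mem hf hg
    | smul c f hf => rw [map_smul]; exact p.smul_mem c hf

noncomputable def demote {V : Type} [AddCommGroup V] [Module ℂ V]
    (ρ : Representation ℂ G V) (S : Submodule (MonoidAlgebra ℂ G) ρ.asModule) :
    Submodule ℂ V where
  carrier := show Set V from (↑S : Set ρ.asModule)
  add_mem' := S.add_mem
  zero_mem' := S.zero_mem
  smul_mem' := by
    intro c v hv
    have h2 := S.smul_mem (algebraMap ℂ (MonoidAlgebra ℂ G) c)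
      (show ρ.asModuleEquiv.symm v ∈ S from hv)
    rw [← ρ.asModuleEquiv_symm_map_smul] at h2
    exact h2

theorem demote_inv {V : Type} [AddCommGroup V] [Module ℂ V]
    (ρ : Representation ℂ G V) (S : Submodule (MonoidAlgebra ℂ G) ρ.asModule) :
    ∀ g : G, ∀ v ∈ demote ρ S, ρ g v ∈ demote ρ S := by
  intro g v hv
  have h2 := S.smul_mem (MonoidAlgebra.of ℂ G g)
    (show ρ.asModuleEquiv.symm v ∈ S from hv)
  rw [← ρ.asModuleEquiv_symm_map_rho] at h2
  exact h2

theorem mem_demote {V : Type} [AddCommGroup V] [Module ℂ V]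
    (ρ : Representation ℂ G V) (S : Submodule (MonoidAlgebra ℂ G) ρ.asModule) (v : V) :
    v ∈ demote ρ S ↔ ρ.asModuleEquiv.symm v ∈ S := Iff.rfl

noncomputable def avg (H : Subgroup G) [Fintype ↥H] {V : Type*} [AddCommGroup V] [Module ℂ V]
    (ρ : Representation ℂ G V) : V →ₗ[ℂ] V :=
  (Fintype.card ↥H : ℂ)⁻¹ • ∑ h : ↥H, (ρ ↑h : V →ₗ[ℂ] V)

theorem avg_apply (H : Subgroup G) [Fintype ↥H] {V : Type*} [AddCommGroup V] [Module ℂ V]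
    (ρ : Representation ℂ G V) (v : V) :
    avg H ρ v = (Fintype.card ↥H : ℂ)⁻¹ • ∑ h : ↥H, ρ ↑h v := by
  simp [avg, LinearMap.sum_apply]

theorem avg_fixed (H : Subgroup G) [Fintype ↥H] {V : Type*} [AddCommGroup V] [Module ℂ V]
    (ρ : Representation ℂ G V) (v : V) {h' : G} (hh' : h' ∈ H) :
    ρ h' (avg H ρ v) = avg H ρ v := by
  rw [avg_apply, map_smul, map_sum]
  congr 1
  have : ∀ h : ↥H, ρ h' (ρ ↑h v) = ρ ↑((⟨h', hh'⟩ : ↥H) * h) v := by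
    intro h
    rw [Subgroup.coe_mul, map_mul]
    rfl
  rw [Finset.sum_congr rfl fun h _ => this h]
  exact Equiv.sum_comp (Equiv.mulLeft (⟨h', hh'⟩ : ↥H)) (fun h => ρ ↑h v)

theorem avg_of_fixed (H : Subgroup G) [Fintype ↥H] {V : Type*} [AddCommGroup V] [Module ℂ V]
    (ρ : Representation ℂ G V) (v : V) (hv : ∀ h ∈ H, ρ h v = v) :
    avg H ρ v = v := by
  rw [avg_apply]
  rw [Finset.sum_congr rfl (fun (h : ↥H) _ => hv ↑h h.2)]
  rw [Finset.sum_const, Finset.card_univ, ← Nat.cast_smul_eq_nsmul ℂ, smul_smul,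
    inv_mul_cancel₀ (Nat.cast_ne_zero.mpr Fintype.card_ne_zero), one_smul]

theorem avg_mem_demote {V : Type} [AddCommGroup V] [Module ℂ V] (H : Subgroup G) [Fintype ↥H]
    (ρ : Representation ℂ G V) (S : Submodule (MonoidAlgebra ℂ G) ρ.asModule)
    {v : V} (hv : v ∈ demote ρ S) : avg H ρ v ∈ demote ρ S := by
  rw [avg_apply]
  exact (demote ρ S).smul_mem _ (Submodule.sum_mem _ fun h _ => demote_inv ρ S ↑h v hv)

theorem mem_promote {V : Type} [AddCommGroup V] [Module ℂ V]
    (ρ : Representation ℂ G V) (p : Submodule ℂ V)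
    (hp : ∀ g : G, ∀ v ∈ p, ρ g v ∈ p) (v : ρ.asModule) :
    v ∈ promote ρ p hp ↔ ρ.asModuleEquiv v ∈ p := Iff.rfl

theorem subRep_irred {V : Type} [AddCommGroup V] [Module ℂ V]
    (ρ : Representation ℂ G V) (S : Submodule (MonoidAlgebra ℂ G) ρ.asModule)
    (hS : IsSimpleModule (MonoidAlgebra ℂ G) ↥S) :
    IsIrredRep (subRep ρ (demote ρ S) (demote_inv ρ S)) := by
  have hatom : IsAtom S := isSimpleModule_iff_isAtom.mp hS
  constructor
  · obtain ⟨x, hxS, hx0⟩ := Submodule.ne_bot_iff S |>.mp hatom.1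
    refine ⟨⟨ρ.asModuleEquiv x, hxS⟩, 0, fun h => hx0 ?_⟩
    have := congrArg Subtype.val h
    exact this
  · intro p hp
    have hq₀ : ∀ g : G, ∀ v ∈ p.map (demote ρ S).subtype,
        ρ g v ∈ p.map (demote ρ S).subtype := by
      rintro g v ⟨y, hy, rfl⟩
      exact ⟨subRep ρ (demote ρ S) (demote_inv ρ S) g y, hp g y hy, rfl⟩
    have hqS : promote ρ (p.map (demote ρ S).subtype) hq₀ ≤ S := by
      rintro x hx
      obtain ⟨y, _, hyx⟩ := (mem_promote ρ _ hq₀ x).mp hx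
      have h1 : ρ.asModuleEquiv.symm ((demote ρ S).subtype y) ∈ S := y.2
      rw [hyx] at h1
      simpa using h1
    rcases (lt_or_eq_of_le hqS) with hlt | heq
    · left
      have hbot := hatom.2 _ hlt
      ext y
      simp only [Submodule.mem_bot]
      constructor
      · intro hy
        have hxq : (ρ.asModuleEquiv.symm ↑y) ∈ promote ρ (p.map (demote ρ S).subtype) hq₀ := by
          rw [mem_promote]
          exact ⟨y, hy, rfl⟩
        rw [hbot] at hxq
        have h0 : ρ.asModuleEquiv.symm (y : V) = 0 := hxq
        apply Subtype.ext
        exact (LinearEquiv.map_eq_zero_iff _).mp h0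
      · rintro rfl; exact p.zero_mem
    · right
      rw [Submodule.eq_top_iff']
      intro y
      have hy : (ρ.asModuleEquiv.symm ↑y) ∈ S := y.2
      have hy2 := (SetLike.ext_iff.mp heq (ρ.asModuleEquiv.symm ↑y)).mpr hy
      obtain ⟨z, hz, hzy⟩ := (mem_promote ρ _ hq₀ _).mp hy2
      have hzz : z = y := Subtype.ext hzy
      rwa [← hzz]

theorem aux_linprim {G : Type} [Group G] [Finite G] (H : Subgroup G) (hH : IsCoatom H)
    {V : Type} [AddCommGroup V] [Module ℂ V] [FiniteDimensional ℂ V]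
    (ρ : Representation ℂ G V) (v₀ : V) (hfix : ∀ h ∈ H, ρ h v₀ = v₀)
    (hnf : ∀ g : G, ρ g v₀ = v₀ → g ∈ H) :
    ∃ W : FDRep ℂ G, IsIrredRep W.ρ ∧ repStab W.ρ ↑(fixedSubmodule W.ρ H) = H := by
  classical
  letI : Fintype G := Fintype.ofFinite G
  haveI : NeZero ((Fintype.card G : ℂ)) := ⟨Nat.cast_ne_zero.mpr Fintype.card_ne_zero⟩
  by_contra hcon
  push_neg at hcon
  have hall : ∀ S : Submodule (MonoidAlgebra ℂ G) ρ.asModule,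
      IsSimpleModule (MonoidAlgebra ℂ G) ↥S →
      repStab (subRep ρ (demote ρ S) (demote_inv ρ S))
        ↑(fixedSubmodule (subRep ρ (demote ρ S) (demote_inv ρ S)) H) = ⊤ := by
    intro S hS
    have hirr := subRep_irred ρ S hS
    have hne0 := hcon (FDRep.of (subRep ρ (demote ρ S) (demote_inv ρ S))) hirr
    have hne : repStab (subRep ρ (demote ρ S) (demote_inv ρ S))
        ↑(fixedSubmodule (subRep ρ (demote ρ S) (demote_inv ρ S)) H) ≠ H := hne0
    have hle : H ≤ repStab (subRep ρ (demote ρ S) (demote_inv ρ S))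
        ↑(fixedSubmodule (subRep ρ (demote ρ S) (demote_inv ρ S)) H) := by
      intro h hh x hx
      exact hx h hh
    exact hH.2 _ (lt_of_le_of_ne hle (Ne.symm hne))
  obtain ⟨g₀, hg₀⟩ : ∃ g₀, g₀ ∉ H := by
    by_contra hc
    push_neg at hc
    exact hH.1 (Subgroup.eq_top_iff' H |>.mpr hc)
  refine hg₀ (hnf g₀ ?_)
  have hδ' : (ρ.asModuleEquiv.symm v₀) ∈
      sSup { m : Submodule (MonoidAlgebra ℂ G) ρ.asModule |
        IsSimpleModule (MonoidAlgebra ℂ G) ↥m } := by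
    rw [IsSemisimpleModule.sSup_simples_eq_top]; trivial
  rw [sSup_eq_iSup'] at hδ'
  have hC : ρ g₀ (avg H ρ (ρ.asModuleEquiv (ρ.asModuleEquiv.symm v₀)))
      = avg H ρ (ρ.asModuleEquiv (ρ.asModuleEquiv.symm v₀)) := by
    refine Submodule.iSup_induction
      (motive := fun v => ρ g₀ (avg H ρ (ρ.asModuleEquiv v)) = avg H ρ (ρ.asModuleEquiv v))
      _ hδ' ?_ ?_ ?_
    · rintro ⟨S, hS⟩ x hx
      have hxd : (ρ.asModuleEquiv x) ∈ demote ρ S := hx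
      have hmem : avg H ρ (ρ.asModuleEquiv x) ∈ demote ρ S := avg_mem_demote H ρ S hxd
      have hfx : (⟨avg H ρ (ρ.asModuleEquiv x), hmem⟩ : ↥(demote ρ S)) ∈
          fixedSubmodule (subRep ρ (demote ρ S) (demote_inv ρ S)) H := by
        intro h hh
        exact Subtype.ext (avg_fixed H ρ _ hh)
      have hg₀mem : g₀ ∈ repStab (subRep ρ (demote ρ S) (demote_inv ρ S))
          ↑(fixedSubmodule (subRep ρ (demote ρ S) (demote_inv ρ S)) H) := by
        rw [hall S hS]; trivial
      have hfin := hg₀mem _ hfx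
      exact congrArg Subtype.val hfin
    · simp
    · intro x y hx hy
      simp only [map_add, hx, hy]
  have havg : avg H ρ v₀ = v₀ := avg_of_fixed H ρ v₀ hfix
  simpa [havg] using hC


/-- A maximal interval `[H, G]` is linearly primitive: if `H` is a maximal subgroup of
the finite group `G`, there is an irreducible finite-dimensional complex representation
`V` of `G` with `G_(V^H) = H`. -/
theorem maximal_subgroup_linearly_primitive {G : Type} [Group G] [Finite G]
    (H : Subgroup G) (hH : IsCoatom H) :
    ∃ V : FDRep ℂ G, IsIrredRep V.ρ ∧ repStab V.ρ ↑(fixedSubmodule V.ρ H) = H := by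
  classical
  letI : Fintype (G ⧸ H) := Fintype.ofFinite _
  haveI : FiniteDimensional ℂ (MonoidAlgebra ℂ (G ⧸ H)) :=
    Module.Finite.equiv ((Finsupp.linearEquivFunOnFinite ℂ ℂ (G ⧸ H)).symm.trans
      (MonoidAlgebra.coeffLinearEquiv ℂ).symm)
  refine aux_linprim H hH (Representation.ofMulAction ℂ G (G ⧸ H))
    (MonoidAlgebra.single (QuotientGroup.mk (1 : G)) 1) ?_ ?_
  · intro h hh
    rw [Representation.ofMulAction_single]
    congr 1
    rw [MulAction.Quotient.smul_mk]
    exact QuotientGroup.eq.mpr (by simpa using H.inv_mem hh)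
  · intro g hg
    rw [Representation.ofMulAction_single, MulAction.Quotient.smul_mk, smul_eq_mul, mul_one] at hg
    have heq1 : (QuotientGroup.mk g : G ⧸ H) = QuotientGroup.mk (1 : G) :=
      (MonoidAlgebra.single_left_inj one_ne_zero).mp hg
    simpa using QuotientGroup.eq.mp heq1
end

section
/- Let G be a finite group and H a subgroup of G such that the interval [H,G] in the subgroup lattice is a distributive lattice. Then there exists an irreducible finite-dimensional complex representation V of G such that the pointwise stabilizer of the H-fixed subspace equals H, i.e., G_{(V^H)} = H. -/
noncomputable section DualOreAux

open MonoidAlgebra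
open scoped Classical

variable {G : Type} [Group G] [Fintype G]

/-- The finset of elements of a subgroup. -/
noncomputable def KF (K : Subgroup G) : Finset G :=
  @Finset.filter _ (· ∈ K) (Classical.decPred _) Finset.univ

lemma mem_KF {K : Subgroup G} {g : G} : g ∈ KF K ↔ g ∈ K := by
  classical
  simp [KF]

lemma KF_card_pos {K : Subgroup G} : 0 < (KF K).card :=
  Finset.card_pos.2 ⟨1, mem_KF.2 K.one_mem⟩

lemma KF_card_ne_zero {K : Subgroup G} : ((KF K).card : ℂ) ≠ 0 := by
  exact_mod_cast KF_card_pos.ne'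

/-- The normalized indicator of a subgroup in the group algebra. -/
noncomputable def eS (K : Subgroup G) : MonoidAlgebra ℂ G :=
  ((KF K).card : ℂ)⁻¹ • ∑ g ∈ KF K, single g (1 : ℂ)

lemma eS_def (K : Subgroup G) :
    eS K = ((KF K).card : ℂ)⁻¹ • ∑ g ∈ KF K, single g (1 : ℂ) := rfl

lemma eS_apply (K : Subgroup G) (x : G) :
    (eS K).coeff x = ((KF K).card : ℂ)⁻¹ * (if x ∈ K then 1 else 0) := by
  show (((KF K).card : ℂ)⁻¹ • ∑ g ∈ KF K, single g (1:ℂ)).coeff x = _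
  rw [show ((((KF K).card : ℂ)⁻¹ • ∑ g ∈ KF K, single g (1:ℂ))).coeff x
      = ((KF K).card : ℂ)⁻¹ * (∑ g ∈ KF K, single g (1:ℂ)).coeff x from rfl]
  congr 1
  rw [MonoidAlgebra.coeff_sum, Finset.sum_apply']
  rw [show (∑ g ∈ KF K, (single g (1:ℂ)).coeff x) = ∑ g ∈ KF K, if g = x then (1:ℂ) else 0 from
    Finset.sum_congr rfl fun g _ => by rw [MonoidAlgebra.coeff_single, Finsupp.single_apply]]
  rw [Finset.sum_ite_eq' (KF K) x (fun _ => (1:ℂ))]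
  simp [mem_KF]

lemma eS_apply_ne {K : Subgroup G} {x : G} (hx : (eS K).coeff x ≠ 0) : x ∈ K := by
  by_contra h
  rw [eS_apply, if_neg h, mul_zero] at hx
  exact hx rfl

lemma eS_apply_one (K : Subgroup G) : (eS K).coeff 1 = ((KF K).card : ℂ)⁻¹ := by
  rw [eS_apply, if_pos K.one_mem, mul_one]

lemma single_mul_eS {K : Subgroup G} {h : G} (hh : h ∈ K) :
    single h (1 : ℂ) * eS K = eS K := by
  unfold eS
  rw [mul_smul_comm, Finset.mul_sum]
  congr 1
  simp_rw [MonoidAlgebra.single_mul_single, one_mul]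
  apply Finset.sum_nbij' (fun g => h * g) (fun g => h⁻¹ * g)
  · intro a ha; exact mem_KF.2 (K.mul_mem hh (mem_KF.1 ha))
  · intro a ha; exact mem_KF.2 (K.mul_mem (K.inv_mem hh) (mem_KF.1 ha))
  · intro a _; simp [mul_assoc]
  · intro a _; simp [mul_assoc]
  · intro a _; rfl

lemma eS_mul_single {K : Subgroup G} {h : G} (hh : h ∈ K) :
    eS K * single h (1 : ℂ) = eS K := by
  unfold eS
  rw [smul_mul_assoc, Finset.sum_mul]
  congr 1
  simp_rw [MonoidAlgebra.single_mul_single, mul_one]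
  apply Finset.sum_nbij' (fun g => g * h) (fun g => g * h⁻¹)
  · intro a ha; exact mem_KF.2 (K.mul_mem (mem_KF.1 ha) hh)
  · intro a ha; exact mem_KF.2 (K.mul_mem (mem_KF.1 ha) (K.inv_mem hh))
  · intro a _; simp [mul_assoc]
  · intro a _; simp [mul_assoc]
  · intro a _; rfl

lemma eS_mul_eS {K L : Subgroup G} (hLK : L ≤ K) : eS K * eS L = eS K := by
  rw [eS_def L, mul_smul_comm, Finset.mul_sum]
  have : ∀ g ∈ KF L, eS K * single g (1:ℂ) = eS K := fun g hg =>
    eS_mul_single (hLK (mem_KF.1 hg))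
  rw [Finset.sum_congr rfl this, Finset.sum_const, ← Nat.cast_smul_eq_nsmul ℂ,
    smul_smul, inv_mul_cancel₀ KF_card_ne_zero, one_smul]

lemma eS_mul_eS' {K L : Subgroup G} (hLK : L ≤ K) : eS L * eS K = eS K := by
  rw [eS_def L, smul_mul_assoc, Finset.sum_mul]
  have : ∀ g ∈ KF L, single g (1:ℂ) * eS K = eS K := fun g hg =>
    single_mul_eS (hLK (mem_KF.1 hg))
  rw [Finset.sum_congr rfl this, Finset.sum_const, ← Nat.cast_smul_eq_nsmul ℂ,
    smul_smul, inv_mul_cancel₀ KF_card_ne_zero, one_smul]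

lemma eS_mul_apply (K : Subgroup G) (f : MonoidAlgebra ℂ G) (x : G) :
    (eS K * f).coeff x = ((KF K).card : ℂ)⁻¹ * ∑ g ∈ KF K, f.coeff (g⁻¹ * x) := by
  rw [eS_def, smul_mul_assoc, Finset.sum_mul, MonoidAlgebra.coeff_smul_apply,
    MonoidAlgebra.coeff_sum, Finsupp.finset_sum_apply, smul_eq_mul]
  congr 1
  refine Finset.sum_congr rfl fun g _ => ?_
  rw [MonoidAlgebra.coeff_single_mul_apply, one_mul]

end DualOreAux

section LatticePart
open scoped Classical

variable {G : Type} [Group G]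

/-- `M` is a minimal overgroup (atom) of `H`. -/
def IsAtomOv (H M : Subgroup G) : Prop := H < M ∧ ∀ L, H < L → L ≤ M → L = M

/-- Join of `H` with a finset of subgroups. -/
def JF (H : Subgroup G) (s : Finset (Subgroup G)) : Subgroup G := H ⊔ s.sup id

lemma le_JF (H : Subgroup G) (s : Finset (Subgroup G)) : H ≤ JF H s := le_sup_left

lemma JF_empty (H : Subgroup G) : JF H ∅ = H := by simp [JF]

lemma JF_insert (H : Subgroup G) (M : Subgroup G) (s : Finset (Subgroup G)) :
    JF H (insert M s) = M ⊔ JF H s := by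
  simp only [JF, Finset.sup_insert, id]
  rw [sup_left_comm]

lemma mem_le_JF {H M : Subgroup G} {s : Finset (Subgroup G)} (h : M ∈ s) : M ≤ JF H s :=
  le_trans (Finset.le_sup (f := id) h) le_sup_right

lemma JF_mono (H : Subgroup G) {s t : Finset (Subgroup G)} (h : s ⊆ t) : JF H s ≤ JF H t :=
  sup_le_sup le_rfl (Finset.sup_mono h)

variable {H : Subgroup G}
  (hdist : ∀ x y z : Subgroup G, H ≤ x → H ≤ y → H ≤ z →
      x ⊓ (y ⊔ z) = (x ⊓ y) ⊔ (x ⊓ z))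

lemma atom_inf_atom {M N : Subgroup G} (hM : IsAtomOv H M) (hN : IsAtomOv H N)
    (hMN : M ≠ N) : M ⊓ N = H := by
  rcases (le_inf hM.1.le hN.1.le).lt_or_eq with h | h
  · exact absurd ((hM.2 _ h inf_le_left).symm.trans (hN.2 _ h inf_le_right)) hMN
  · exact h.symm

include hdist in
lemma atom_inf_JF {M : Subgroup G} (hM : IsAtomOv H M) {s : Finset (Subgroup G)}
    (hs : ∀ N ∈ s, IsAtomOv H N) (hMs : M ∉ s) : M ⊓ JF H s = H := by
  classical
  induction s using Finset.induction_on with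
  | empty => rw [JF_empty, inf_eq_right.2 hM.1.le]
  | @insert N s' hN ih =>
    rw [JF_insert, hdist M N (JF H s') hM.1.le (hs N (Finset.mem_insert_self N s')).1.le
      (le_JF H s'),
      atom_inf_atom hM (hs N (Finset.mem_insert_self N s')) (by rintro rfl; exact hMs (Finset.mem_insert_self M s')),
      ih (fun L hL => hs L (Finset.mem_insert_of_mem hL)) (fun hc => hMs (Finset.mem_insert_of_mem hc)),
      sup_idem]

include hdist in
lemma JF_inf_JF {s t : Finset (Subgroup G)}
    (hs : ∀ N ∈ s, IsAtomOv H N) (ht : ∀ N ∈ t, IsAtomOv H N) :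
    JF H s ⊓ JF H t = JF H (s ∩ t) := by
  classical
  induction s using Finset.induction_on with
  | empty => rw [JF_empty, Finset.empty_inter, JF_empty, inf_eq_left.2 (le_JF H t)]
  | @insert N s' hN ih =>
    have hNatom := hs N (Finset.mem_insert_self N s')
    have hs' : ∀ L ∈ s', IsAtomOv H L := fun L hL => hs L (Finset.mem_insert_of_mem hL)
    rw [JF_insert, inf_comm (N ⊔ JF H s') (JF H t),
      hdist (JF H t) N (JF H s') (le_JF H t) hNatom.1.le (le_JF H s'),
      inf_comm (JF H t) (JF H s'), ih hs']
    by_cases hNt : N ∈ t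
    · rw [inf_eq_right.2 (mem_le_JF hNt), Finset.insert_inter_of_mem hNt, JF_insert]
    · rw [inf_comm (JF H t) N, atom_inf_JF hdist hNatom ht hNt,
        Finset.insert_inter_of_notMem hNt, sup_eq_right.2 (le_JF H _)]

lemma exists_atom_le [Finite G] {K : Subgroup G} (hK : H < K) :
    ∃ M : Subgroup G, IsAtomOv H M ∧ M ≤ K := by
  have hfin : Finite (Subgroup G) := by infer_instance
  obtain ⟨m, hm, hmin⟩ := Set.Finite.exists_minimal (s := {L : Subgroup G | H < L ∧ L ≤ K})
    (Set.toFinite _) ⟨K, hK, le_rfl⟩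
  exact ⟨m, ⟨hm.1, fun L hL hLm => le_antisymm hLm (hmin ⟨hL, hLm.trans hm.2⟩ hLm)⟩, hm.2⟩

end LatticePart

noncomputable section MainInduction

open MonoidAlgebra
open scoped Classical

variable {G : Type} [Group G] [Fintype G]

/-- The product `∏ (e_H - e_M)` over a list of subgroups. -/
noncomputable def Pl (H : Subgroup G) : List (Subgroup G) → MonoidAlgebra ℂ G
  | [] => eS H
  | M :: l => (eS H - eS M) * Pl H l

lemma Pl_nil (H : Subgroup G) : Pl H [] = eS H := rfl

lemma Pl_cons (H M : Subgroup G) (l : List (Subgroup G)) :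
    Pl H (M :: l) = (eS H - eS M) * Pl H l := rfl

lemma eS_mul_Pl (H : Subgroup G) (l : List (Subgroup G)) (hl : ∀ M ∈ l, H ≤ M) :
    eS H * Pl H l = Pl H l := by
  induction l with
  | nil => exact eS_mul_eS le_rfl
  | cons M l ih =>
    rw [Pl_cons, ← mul_assoc, mul_sub, eS_mul_eS le_rfl,
      eS_mul_eS' (hl M (List.mem_cons_self))]

lemma Pl_cons' (H M : Subgroup G) (l : List (Subgroup G)) (hl : ∀ N ∈ l, H ≤ N) :
    Pl H (M :: l) = Pl H l - eS M * Pl H l := by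
  rw [Pl_cons, sub_mul, eS_mul_Pl H l hl]

lemma single_mul_Pl (H : Subgroup G) (l : List (Subgroup G)) (hl : ∀ M ∈ l, H ≤ M)
    {h : G} (hh : h ∈ H) : single h (1 : ℂ) * Pl H l = Pl H l := by
  have h1 := eS_mul_Pl H l hl
  calc single h (1:ℂ) * Pl H l = single h 1 * (eS H * Pl H l) := by rw [h1]
    _ = (single h 1 * eS H) * Pl H l := by rw [mul_assoc]
    _ = eS H * Pl H l := by rw [single_mul_eS hh]
    _ = Pl H l := h1

lemma Pl_apply_mul_left (H : Subgroup G) (l : List (Subgroup G)) (hl : ∀ M ∈ l, H ≤ M)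
    {h : G} (hh : h ∈ H) (x : G) : (Pl H l).coeff (h * x) = (Pl H l).coeff x := by
  conv_lhs => rw [← single_mul_Pl H l hl hh]
  rw [MonoidAlgebra.coeff_single_mul_apply, one_mul, inv_mul_cancel_left]

lemma Pl_support (H : Subgroup G) (l : List (Subgroup G)) :
    (∀ M ∈ l, H ≤ M) → ∀ x : G, (Pl H l).coeff x ≠ 0 → x ∈ JF H l.toFinset := by
  induction l with
  | nil =>
    intro _ x hx
    rw [List.toFinset_nil, JF_empty]
    exact eS_apply_ne hx
  | cons M l ih =>
    intro hl x hx
    have hl' : ∀ N ∈ l, H ≤ N := fun N hN => hl N (List.mem_cons_of_mem M hN)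
    rw [Pl_cons' H M l hl', MonoidAlgebra.coeff_sub, Finsupp.sub_apply] at hx
    rw [List.toFinset_cons]
    by_cases h1 : (Pl H l).coeff x = 0
    · have h2 : (eS M * Pl H l).coeff x ≠ 0 := fun hc => hx (by rw [h1, hc, sub_zero])
      rw [eS_mul_apply] at h2
      have h3 : ∑ g ∈ KF M, (Pl H l).coeff (g⁻¹ * x) ≠ 0 := by
        intro hc; rw [hc, mul_zero] at h2; exact h2 rfl
      obtain ⟨g, hg, hgx⟩ := Finset.exists_ne_zero_of_sum_ne_zero h3
      have hgX : g⁻¹ * x ∈ JF H l.toFinset := ih hl' _ hgx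
      have : x = g * (g⁻¹ * x) := by rw [mul_inv_cancel_left]
      rw [this]
      exact (JF H (insert M l.toFinset)).mul_mem
        (mem_le_JF (Finset.mem_insert_self M _) (mem_KF.1 hg))
        (JF_mono H (Finset.subset_insert M _) hgX)
    · exact JF_mono H (Finset.subset_insert M _) (ih hl' x h1)

end MainInduction

noncomputable section Witness

open MonoidAlgebra
open scoped Classical

variable {G : Type} [Group G] [Fintype G] {H : Subgroup G}
  (hdist : ∀ x y z : Subgroup G, H ≤ x → H ≤ y → H ≤ z →
      x ⊓ (y ⊔ z) = (x ⊓ y) ⊔ (x ⊓ z))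

include hdist in
lemma main_witness : ∀ l : List (Subgroup G), l.Nodup → (∀ M ∈ l, IsAtomOv H M) →
    ∃ x : G, x ∈ JF H l.toFinset ∧
      (∀ S : Finset (Subgroup G), S ⊆ l.toFinset → S ≠ l.toFinset → x ∉ JF H S) ∧
      (Pl H l).coeff x ≠ 0 := by
  intro l
  induction l with
  | nil =>
    intro _ _
    refine ⟨1, (JF H ∅).one_mem, ?_, ?_⟩
    · intro S hS hSne
      exact absurd (Finset.subset_empty.1 (by simpa using hS)) hSne
    · rw [Pl_nil, eS_apply_one]
      exact inv_ne_zero KF_card_ne_zero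
  | cons M l ih =>
    intro hnd hatoms
    have hMl : M ∉ l := (List.nodup_cons.1 hnd).1
    have hMlF : M ∉ l.toFinset := fun hc => hMl (List.mem_toFinset.1 hc)
    have hM : IsAtomOv H M := hatoms M (List.mem_cons_self)
    have hlatoms : ∀ N ∈ l, IsAtomOv H N := fun N hN => hatoms N (List.mem_cons_of_mem M hN)
    have hlatomsF : ∀ N ∈ l.toFinset, IsAtomOv H N := fun N hN =>
      hlatoms N (List.mem_toFinset.1 hN)
    have hlle : ∀ N ∈ l, H ≤ N := fun N hN => (hlatoms N hN).1.le
    obtain ⟨x', hx'J, hx'w, hx'P⟩ := ih (List.nodup_cons.1 hnd).2 hlatoms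
    obtain ⟨m, hmM, hmH⟩ := SetLike.exists_of_lt hM.1
    have hw : ∀ S : Finset (Subgroup G), S ⊆ insert M l.toFinset →
        S ≠ insert M l.toFinset → m * x' ∉ JF H S := by
      intro S hS hSne hxS
      have hSatoms : ∀ N ∈ S, IsAtomOv H N := by
        intro N hN
        rcases Finset.mem_insert.1 (hS hN) with h | h
        · exact h ▸ hM
        · exact hlatomsF N h
      by_cases hMS : M ∈ S
      · have hx'S : x' ∈ JF H S := by
          have := (JF H S).mul_mem ((JF H S).inv_mem (mem_le_JF hMS hmM)) hxS
          rwa [inv_mul_cancel_left] at this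
        have hx'2 : x' ∈ JF H S ⊓ JF H l.toFinset := ⟨hx'S, hx'J⟩
        rw [JF_inf_JF hdist hSatoms hlatomsF] at hx'2
        refine hx'w (S ∩ l.toFinset) Finset.inter_subset_right ?_ hx'2
        intro hc
        have h1 : l.toFinset ⊆ S := Finset.inter_eq_right.1 hc
        exact hSne (Finset.Subset.antisymm hS (Finset.insert_subset hMS h1))
      · have hSsub : S ⊆ l.toFinset := fun a haS =>
          (Finset.mem_insert.1 (hS haS)).resolve_left (fun h => hMS (h ▸ haS))
        have hmmem : m ∈ M ⊓ JF H l.toFinset := by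
          constructor
          · exact hmM
          · have : m * x' * x'⁻¹ ∈ JF H l.toFinset :=
              (JF H l.toFinset).mul_mem (JF_mono H hSsub hxS) ((JF H l.toFinset).inv_mem hx'J)
            rwa [mul_inv_cancel_right] at this
        rw [atom_inf_JF hdist hM hlatomsF hMlF] at hmmem
        exact hmH hmmem
    refine ⟨m * x', ?_, ?_, ?_⟩
    case _ =>
      rw [List.toFinset_cons]
      exact (JF H _).mul_mem (mem_le_JF (Finset.mem_insert_self M _) hmM)
        (JF_mono H (Finset.subset_insert M _) hx'J)
    case _ =>
      rw [List.toFinset_cons]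
      exact hw
    case _ =>
      -- first prove the witness property for reuse
      rw [Pl_cons' H M l hlle, MonoidAlgebra.coeff_sub, Finsupp.sub_apply]
      have hfirst : (Pl H l).coeff (m * x') = 0 := by
        by_contra hc
        have h1 : m * x' ∈ JF H l.toFinset := Pl_support H l hlle _ hc
        refine hw l.toFinset (Finset.subset_insert M _) ?_ h1
        intro hc2
        exact hMlF (hc2 ▸ Finset.mem_insert_self M l.toFinset)
      have hsecond : (eS M * Pl H l).coeff (m * x') ≠ 0 := by
        rw [eS_mul_apply]
        have hterm : ∀ g ∈ KF M, (Pl H l).coeff (g⁻¹ * (m * x'))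
            = if g⁻¹ * m ∈ H then (Pl H l).coeff x' else 0 := by
          intro g hg
          rw [← mul_assoc]
          by_cases hgm : g⁻¹ * m ∈ H
          · rw [if_pos hgm, Pl_apply_mul_left H l hlle hgm]
          · rw [if_neg hgm]
            by_contra hc
            have h1 : g⁻¹ * m * x' ∈ JF H l.toFinset := Pl_support H l hlle _ hc
            have h2 : g⁻¹ * m ∈ M ⊓ JF H l.toFinset := by
              constructor
              · exact M.mul_mem (M.inv_mem (mem_KF.1 hg)) hmM
              · have : g⁻¹ * m * x' * x'⁻¹ ∈ JF H l.toFinset :=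
                  (JF H l.toFinset).mul_mem h1 ((JF H l.toFinset).inv_mem hx'J)
                rwa [mul_inv_cancel_right] at this
            rw [atom_inf_JF hdist hM hlatomsF hMlF] at h2
            exact hgm h2
        rw [Finset.sum_congr rfl hterm, Finset.sum_ite, Finset.sum_const_zero, add_zero,
          Finset.sum_const]
        have hcard : (Finset.filter (fun g => g⁻¹ * m ∈ H) (KF M)).card = (KF H).card := by
          have himg : Finset.filter (fun g => g⁻¹ * m ∈ H) (KF M)
              = (KF H).image (fun h => m * h⁻¹) := by
            ext g
            simp only [Finset.mem_filter, Finset.mem_image]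
            constructor
            · rintro ⟨hgM, hgm⟩
              refine ⟨g⁻¹ * m, mem_KF.2 hgm, ?_⟩
              rw [mul_inv_rev, inv_inv, ← mul_assoc, mul_inv_cancel, one_mul]
            · rintro ⟨h, hh, rfl⟩
              constructor
              · exact mem_KF.2 (M.mul_mem hmM (M.inv_mem (hM.1.le (mem_KF.1 hh))))
              · rw [mul_inv_rev, inv_inv, mul_assoc, inv_mul_cancel, mul_one]
                exact mem_KF.1 hh
          rw [himg, Finset.card_image_of_injective _ fun a b hab => by
            simpa using mul_left_cancel hab]
        rw [hcard]
        refine mul_ne_zero (inv_ne_zero KF_card_ne_zero) ?_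
        rw [nsmul_eq_mul]
        exact mul_ne_zero KF_card_ne_zero hx'P
      rw [hfirst, zero_sub]
      exact neg_ne_zero.2 hsecond

end Witness

noncomputable section Glue

open MonoidAlgebra
open scoped Classical

variable {G : Type} [Group G] [Fintype G]

lemma exists_simple_of_mul_ne_zero {A : Type} [Ring A]
    (s : Finset (Submodule A A)) :
    ∀ x : A, x ∈ (⨆ i ∈ s, (i : Submodule A A)) → ∀ P : A, P * x ≠ 0 →
    ∃ W ∈ s, ∃ z ∈ W, P * z ≠ 0 := by
  classical
  induction s using Finset.induction_on with
  | empty =>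
    intro x hx P hP
    simp only [Finset.notMem_empty, iSup_false, iSup_bot] at hx
    rw [Submodule.mem_bot] at hx
    exact absurd (by rw [hx, mul_zero]) hP
  | @insert W₀ s' hW₀ ih =>
    intro x hx P hP
    rw [Finset.iSup_insert] at hx
    obtain ⟨y, hy, z, hz, rfl⟩ := Submodule.mem_sup.1 hx
    rw [mul_add] at hP
    by_cases h1 : P * y = 0
    · have h2 : P * z ≠ 0 := fun hc => hP (by rw [h1, hc, add_zero])
      obtain ⟨W, hWs, w, hw, hPw⟩ := ih z hz P h2
      exact ⟨W, Finset.mem_insert_of_mem hWs, w, hw, hPw⟩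
    · exact ⟨W₀, Finset.mem_insert_self W₀ s', y, hy, h1⟩

lemma exists_simple_submodule_mul_ne_zero [NeZero (Fintype.card G : ℂ)]
    (P : MonoidAlgebra ℂ G) (hP : P ≠ 0) :
    ∃ W : Submodule (MonoidAlgebra ℂ G) (MonoidAlgebra ℂ G),
      IsSimpleModule (MonoidAlgebra ℂ G) ↥W ∧ ∃ z ∈ W, P * z ≠ 0 := by
  have h1 : (1 : MonoidAlgebra ℂ G) ∈
      sSup {m : Submodule (MonoidAlgebra ℂ G) (MonoidAlgebra ℂ G) |
        IsSimpleModule (MonoidAlgebra ℂ G) ↥m} := by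
    rw [IsSemisimpleModule.sSup_simples_eq_top]
    trivial
  rw [Submodule.mem_sSup_iff_exists_finset] at h1
  obtain ⟨s, hsS, hs1⟩ := h1
  obtain ⟨W, hWs, z, hzW, hPz⟩ :=
    exists_simple_of_mul_ne_zero s 1 hs1 P (by rwa [mul_one])
  exact ⟨W, hsS hWs, z, hzW, hPz⟩

lemma Pl_mul_eq_zero {H : Subgroup G} (W : Submodule (MonoidAlgebra ℂ G) (MonoidAlgebra ℂ G))
    {M : Subgroup G} (hq : ∀ w ∈ W, (eS H - eS M) * w = 0) :
    ∀ l : List (Subgroup G), M ∈ l → ∀ z ∈ W, Pl H l * z = 0 := by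
  intro l
  induction l with
  | nil => intro h; exact absurd h List.not_mem_nil
  | cons N l ih =>
    intro hM z hz
    rw [Pl_cons, mul_assoc]
    rcases List.mem_cons.1 hM with h | h
    · have hin : Pl H l * z ∈ W := by
        rw [← smul_eq_mul]; exact W.smul_mem _ hz
      rw [← h]
      exact hq _ hin
    · rw [ih h z hz, mul_zero]

end Glue

lemma mem_fixedSubmodule_iff {G : Type*} [Group G] {V : Type*} [AddCommGroup V] [Module ℂ V]
    {ρ : Representation ℂ G V} {H : Subgroup G} {v : V} :
    v ∈ fixedSubmodule ρ H ↔ ∀ h ∈ H, ρ h v = v := Iff.rfl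

lemma mem_repStab_iff {G : Type*} [Group G] {V : Type*} [AddCommGroup V] [Module ℂ V]
    {ρ : Representation ℂ G V} {X : Set V} {g : G} :
    g ∈ repStab ρ X ↔ ∀ x ∈ X, ρ g x = x := Iff.rfl

/-- **Dual Ore's theorem.** A distributive interval `[H, G]` of a finite group is
linearly primitive: there is an irreducible finite-dimensional complex representation
`V` of `G` with `G_(V^H) = H`. -/
theorem distributive_interval_linearly_primitive {G : Type} [Group G] [Finite G]
    (H : Subgroup G)
    (hdist : ∀ x y z : Subgroup G, H ≤ x → H ≤ y → H ≤ z →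
      x ⊓ (y ⊔ z) = (x ⊓ y) ⊔ (x ⊓ z)) :
    ∃ V : FDRep ℂ G, IsIrredRep V.ρ ∧ repStab V.ρ ↑(fixedSubmodule V.ρ H) = H := by
  classical
  haveI : Fintype G := Fintype.ofFinite G
  haveI : NeZero ((Fintype.card G : ℂ)) := ⟨Nat.cast_ne_zero.2 Fintype.card_ne_zero⟩
  haveI : Module.Finite ℂ (MonoidAlgebra ℂ G) :=
    Module.Finite.equiv ((Finsupp.linearEquivFunOnFinite ℂ ℂ G).symm.trans
      (MonoidAlgebra.coeffLinearEquiv ℂ).symm)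
  -- the atoms of the interval [H, G]
  set l : List (Subgroup G) := ((Set.toFinite {M : Subgroup G | IsAtomOv H M}).toFinset).toList
    with hldef
  have hlnd : l.Nodup := Finset.nodup_toList _
  have hlF : ∀ M : Subgroup G, M ∈ l ↔ IsAtomOv H M := by
    intro M
    rw [hldef, Finset.mem_toList, Set.Finite.mem_toFinset]
    exact Iff.rfl
  have hlatoms : ∀ M ∈ l, IsAtomOv H M := fun M hM => (hlF M).1 hM
  obtain ⟨x, hxJ, hxw, hxP⟩ := main_witness hdist l hlnd hlatoms
  have hPne : Pl H l ≠ 0 := fun hc => hxP (by rw [hc]; rfl)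
  obtain ⟨W, hWsimple, z, hzW, hPz⟩ := exists_simple_submodule_mul_ne_zero (Pl H l) hPne
  have hatom : IsAtom W := isSimpleModule_iff_isAtom.1 hWsimple
  -- the subrepresentation on W
  have hmemX : ∀ (g : G) (w : ↥(W.restrictScalars ℂ)),
      MonoidAlgebra.single g (1:ℂ) * w.val ∈ W.restrictScalars ℂ := by
    intro g w
    rw [Submodule.restrictScalars_mem, ← smul_eq_mul]
    exact W.smul_mem _ ((Submodule.restrictScalars_mem ℂ W _).1 w.2)
  let ρ : Representation ℂ G ↥(W.restrictScalars ℂ) := {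
    toFun := fun g => {
      toFun := fun w => ⟨MonoidAlgebra.single g 1 * w.val, hmemX g w⟩
      map_add' := fun a b => Subtype.ext (mul_add _ a.val b.val)
      map_smul' := fun c a => Subtype.ext (mul_smul_comm c _ a.val) }
    map_one' := LinearMap.ext fun w => Subtype.ext (by
      show MonoidAlgebra.single 1 1 * w.val = w.val
      rw [← MonoidAlgebra.one_def, one_mul])
    map_mul' := fun g h => LinearMap.ext fun w => Subtype.ext (by
      show MonoidAlgebra.single (g * h) 1 * w.val
        = MonoidAlgebra.single g 1 * (MonoidAlgebra.single h 1 * w.val)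
      rw [← mul_assoc, MonoidAlgebra.single_mul_single, one_mul]) }
  have hρval : ∀ (g : G) (w : ↥(W.restrictScalars ℂ)),
      (ρ g w).val = MonoidAlgebra.single g 1 * w.val := fun _ _ => rfl
  -- irreducibility
  have hIrr : IsIrredRep ρ := by
    constructor
    · obtain ⟨w, hwW, hwne⟩ := Submodule.exists_mem_ne_zero_of_ne_bot hatom.1
      refine ⟨⟨w, (Submodule.restrictScalars_mem ℂ W _).2 hwW⟩, 0, ?_⟩
      intro hcon
      exact hwne (congrArg Subtype.val hcon)
    · intro p hp
      -- the image of p in the group algebra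
      have hcar : ∀ (a m : MonoidAlgebra ℂ G),
          m ∈ Subtype.val '' (p : Set ↥(W.restrictScalars ℂ)) →
          a * m ∈ Subtype.val '' (p : Set ↥(W.restrictScalars ℂ)) := by
        intro a
        induction a using MonoidAlgebra.induction_linear with
        | zero => intro m hm; rw [zero_mul]; exact ⟨0, p.zero_mem, rfl⟩
        | add f g hf hg =>
          intro m hm
          obtain ⟨v1, hv1, he1⟩ := hf m hm
          obtain ⟨v2, hv2, he2⟩ := hg m hm
          rw [add_mul, ← he1, ← he2]
          exact ⟨v1 + v2, p.add_mem hv1 hv2, rfl⟩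
        | single g c =>
          rintro m ⟨v, hv, rfl⟩
          have h1 : MonoidAlgebra.single g c = c • MonoidAlgebra.single g (1:ℂ) := by
            rw [MonoidAlgebra.smul_single', mul_one]
          show MonoidAlgebra.single g c * v.val ∈
            Subtype.val '' (p : Set ↥(W.restrictScalars ℂ))
          rw [h1, smul_mul_assoc, ← hρval g v]
          exact ⟨c • ρ g v, p.smul_mem c (hp g v hv), rfl⟩
      let pA : Submodule (MonoidAlgebra ℂ G) (MonoidAlgebra ℂ G) := {
        carrier := Subtype.val '' (p : Set ↥(W.restrictScalars ℂ))
        add_mem' := by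
          rintro a b ⟨v1, hv1, rfl⟩ ⟨v2, hv2, rfl⟩
          exact ⟨v1 + v2, p.add_mem hv1 hv2, rfl⟩
        zero_mem' := ⟨0, p.zero_mem, rfl⟩
        smul_mem' := by
          intro c m hm
          rw [smul_eq_mul]
          exact hcar c m hm }
      have hpAle : pA ≤ W := by
        rintro a ⟨v, hv, rfl⟩
        exact (Submodule.restrictScalars_mem ℂ W _).1 v.2
      rcases hpAle.lt_or_eq with hlt | heq
      · left
        rw [eq_bot_iff]
        intro v hv
        have h0 : v.val ∈ pA := ⟨v, hv, rfl⟩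
        rw [hatom.2 pA hlt] at h0
        rw [Submodule.mem_bot] at h0 ⊢
        exact Subtype.ext h0
      · right
        rw [eq_top_iff]
        intro v _
        have h0 : v.val ∈ pA := by
          rw [heq]
          exact (Submodule.restrictScalars_mem ℂ W _).1 v.2
        obtain ⟨u, hu, huv⟩ := h0
        rwa [Subtype.ext huv] at hu
  -- computation of the pointwise stabilizer
  have hstab : repStab ρ ↑(fixedSubmodule ρ H) = H := by
    apply le_antisymm
    · intro g hg
      by_contra hgH
      have hHK : H ≤ repStab ρ ↑(fixedSubmodule ρ H) := fun h hh =>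
        mem_repStab_iff.2 fun v hv => (mem_fixedSubmodule_iff.1 (SetLike.mem_coe.1 hv)) h hh
      have hlt : H < repStab ρ ↑(fixedSubmodule ρ H) := by
        refine hHK.lt_of_ne ?_
        intro he
        rw [← he] at hg
        exact hgH hg
      obtain ⟨M, hMatom, hMK⟩ := exists_atom_le hlt
      have hMl : M ∈ l := (hlF M).2 hMatom
      have hq : ∀ w ∈ W, (eS H - eS M) * w = 0 := by
        intro w hw
        have h1 : eS H * w ∈ W := by rw [← smul_eq_mul]; exact W.smul_mem _ hw
        set u : ↥(W.restrictScalars ℂ) :=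
          ⟨eS H * w, (Submodule.restrictScalars_mem ℂ W _).2 h1⟩ with hu
        have hufix : u ∈ fixedSubmodule ρ H := by
          intro h hh
          apply Subtype.ext
          show MonoidAlgebra.single h 1 * (eS H * w) = eS H * w
          rw [← mul_assoc, single_mul_eS hh]
        have hfixM : ∀ m ∈ M, MonoidAlgebra.single m (1:ℂ) * (eS H * w) = eS H * w := by
          intro m hm
          have h2 := mem_repStab_iff.1 (hMK hm) u (SetLike.mem_coe.2 hufix)
          exact congrArg Subtype.val h2
        have hEM : eS M * (eS H * w) = eS H * w := by
          rw [eS_def M, smul_mul_assoc, Finset.sum_mul,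
            Finset.sum_congr rfl (fun m hm => hfixM m (mem_KF.1 hm)), Finset.sum_const,
            ← Nat.cast_smul_eq_nsmul ℂ, smul_smul, inv_mul_cancel₀ KF_card_ne_zero, one_smul]
        have h3 : eS M * w = eS H * w := by
          rw [← eS_mul_eS hMatom.1.le, mul_assoc, hEM]
        rw [sub_mul, h3, sub_self]
      exact hPz (Pl_mul_eq_zero W hq l hMl z hzW)
    · intro h hh
      exact mem_repStab_iff.2 fun v hv =>
        (mem_fixedSubmodule_iff.1 (SetLike.mem_coe.1 hv)) h hh
  haveI : FiniteDimensional ℂ ↥(W.restrictScalars ℂ) := inferInstance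
  exact ⟨FDRep.of ρ, hIrr, hstab⟩
end
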